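/- Define J(X,X̄) = inf_{f,g ∈ G} (‖X•f - X̄‖_B + ‖X - X̄•g‖_B) and d(X,X̄) = inf Σ_{n=1}^N J(X_{n-1},X_n) over all finite chains X₀ = X, X_N = X̄ in F₀. Then for all X, X̄ ∈ F₀: ‖y - ȳ‖_∞ + ‖U - Ū‖_∞ + ‖H - H̄‖_∞ ≤ 2 d(X,X̄). -/

import Mathlib

open MeasureTheory ENNReal

abbrev LagState := (ℝ → ℝ) × (ℝ → ℝ) × (ℝ → ℝ) × (ℝ → ℝ)

/-- The relabeling group as a set of homeomorphisms of `ℝ`. -/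
def Gset : Set (ℝ ≃ₜ ℝ) :=
  {f | (∃ C, LipschitzWith C (fun x => f x - x)) ∧
       BddAbove (Set.range fun x => |f x - x|) ∧
       (∃ C, LipschitzWith C (fun x => f.symm x - x)) ∧
       BddAbove (Set.range fun x => |f.symm x - x|) ∧
       MemLp (fun x => deriv (⇑f) x - 1) 2 volume}

/-- The relabeling action `X • f = (y∘f, U∘f, H∘f, (r∘f)·f')`. -/
noncomputable def relabel (X : LagState) (f : ℝ ≃ₜ ℝ) : LagState :=
  (X.1 ∘ ⇑f, X.2.1 ∘ ⇑f, X.2.2.1 ∘ ⇑f, fun ξ => X.2.2.2 (f ξ) * deriv (⇑f) ξ)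

/-- The `B`-norm of the componentwise difference of two Lagrangian states:
sup norms of `y - ȳ`, `U - Ū`, `H - H̄`, plus `L²` norms of their
derivatives and of `r - r̄`. -/
noncomputable def distB (X Y : LagState) : ℝ≥0∞ :=
  (⨆ ξ, (‖X.1 ξ - Y.1 ξ‖₊ : ℝ≥0∞)) + (⨆ ξ, (‖X.2.1 ξ - Y.2.1 ξ‖₊ : ℝ≥0∞))
    + (⨆ ξ, (‖X.2.2.1 ξ - Y.2.2.1 ξ‖₊ : ℝ≥0∞))
    + eLpNorm (deriv fun ξ => X.1 ξ - Y.1 ξ) 2 volume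
    + eLpNorm (deriv fun ξ => X.2.1 ξ - Y.2.1 ξ) 2 volume
    + eLpNorm (deriv fun ξ => X.2.2.1 ξ - Y.2.2.1 ξ) 2 volume
    + eLpNorm (fun ξ => X.2.2.2 ξ - Y.2.2.2 ξ) 2 volume

/-- The relabeling functional `J`. -/
noncomputable def Jfun (X Y : LagState) : ℝ≥0∞ :=
  ⨅ f ∈ Gset, ⨅ g ∈ Gset, (distB (relabel X f) Y + distB X (relabel Y g))

/-- The set `F₀` of Lagrangian coordinates with `y + H = id`. -/
def F0set : Set LagState :=
  {X | Monotone X.1 ∧ Monotone X.2.2.1 ∧ (∀ ξ, X.1 ξ + X.2.2.1 ξ = ξ) ∧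
       LipschitzWith 1 X.1 ∧ LipschitzWith 1 X.2.2.1 ∧
       (∃ L, LipschitzWith L X.2.1) ∧
       BddAbove (Set.range fun ξ => |X.2.1 ξ|) ∧
       MemLp X.2.2.2 2 volume ∧ MemLp X.2.2.2 ⊤ volume ∧
       (∀ᵐ ξ, deriv X.1 ξ * deriv X.2.2.1 ξ
          = (deriv X.2.1 ξ) ^ 2 + (X.2.2.2 ξ) ^ 2)}

/-- The metric `d` on `F₀`, defined by minimizing sums of `J` over finite chains. -/
noncomputable def dF0 (X Y : LagState) : ℝ≥0∞ :=
  sInf {s | ∃ (N : ℕ) (c : ℕ → LagState), c 0 = X ∧ c N = Y ∧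
    (∀ n ≤ N, c n ∈ F0set) ∧ s = ∑ n ∈ Finset.range N, Jfun (c n) (c (n + 1))}

/-! ### Auxiliary lemmas -/

open Set Filter Topology NNReal

/-- If `f` is `C`-Lipschitz then `|deriv f x| ≤ C` everywhere (junk value `0` otherwise). -/
lemma abs_deriv_le_of_lip {f : ℝ → ℝ} {C : ℝ≥0} (hf : LipschitzWith C f) (x : ℝ) :
    |deriv f x| ≤ (C : ℝ) := by
  by_cases hd : DifferentiableAt ℝ f x
  · have h1 := hasDerivAt_iff_tendsto_slope.1 hd.hasDerivAt
    have h2 : ∀ᶠ y in 𝓝[≠] x, |slope f x y| ≤ (C : ℝ) := by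
      filter_upwards [self_mem_nhdsWithin] with y hy
      have hyx : y ≠ x := hy
      have hlip : |f y - f x| ≤ C * |y - x| := by
        simpa [Real.dist_eq] using hf.dist_le_mul y x
      rw [slope_def_field, abs_div, div_le_iff₀ (abs_pos.2 (sub_ne_zero.2 hyx))]
      exact hlip
    exact le_of_tendsto ((continuous_abs.tendsto _).comp h1) h2
  · simp [deriv_zero_of_not_differentiableAt hd]

/-- A Lipschitz function with a.e. `|deriv| ≤ 1` is `1`-Lipschitz. -/
lemma lip_one_of_ae_deriv_le {f : ℝ → ℝ} {L : ℝ≥0} (hf : LipschitzWith L f)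
    (hd : ∀ᵐ x, |deriv f x| ≤ 1) : LipschitzWith 1 f := by
  have key : ∀ a b : ℝ, a ≤ b → |f b - f a| ≤ b - a := by
    intro a b hab
    set G : Set ℝ := {x | DifferentiableAt ℝ f x} ∩ {x | |deriv f x| ≤ 1} with hG
    set s : Set ℝ := G ∩ Icc a b with hs
    have hsm : MeasurableSet s := by
      refine ((measurableSet_of_differentiableAt ℝ f).inter ?_).inter measurableSet_Icc
      exact measurableSet_le (measurable_deriv f).abs measurable_const
    -- the complement of s in [a,b] is null
    have ht : volume (Icc a b \ s) = 0 := by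
      have h1 : volume Gᶜ = 0 := by
        have h2 : ∀ᵐ x, x ∈ G := by
          filter_upwards [hf.ae_differentiableAt, hd] with x h h2
          exact ⟨h, h2⟩
        exact ae_iff.1 h2
      refine measure_mono_null (fun x hx => ?_) h1
      exact fun hmem => hx.2 ⟨hmem, hx.1⟩
    -- image of the null part is null
    have himg_t : volume (f '' (Icc a b \ s)) = 0 := by
      have h := hf.hausdorffMeasure_image_le zero_le_one (Icc a b \ s)
      rw [hausdorffMeasure_real] at h
      refine le_antisymm ?_ zero_le
      calc volume (f '' (Icc a b \ s)) ≤ (L : ℝ≥0∞) ^ (1 : ℝ) * volume (Icc a b \ s) := h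
        _ = 0 := by rw [ht, mul_zero]
    -- image of the good part
    have himg_s : volume (f '' s) ≤ ENNReal.ofReal (b - a) := by
      have hfd : ∀ x ∈ s, HasFDerivWithinAt f
          ((1 : ℝ →L[ℝ] ℝ).smulRight (deriv f x)) s x := by
        intro x hx
        exact (hasDerivAt_iff_hasFDerivAt.1 hx.1.1.hasDerivAt).hasFDerivWithinAt
      calc volume (f '' s)
          ≤ ∫⁻ x in s, ENNReal.ofReal |(((1 : ℝ →L[ℝ] ℝ).smulRight (deriv f x)).det)| :=
            addHaar_image_le_lintegral_abs_det_fderiv volume hsm hfd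
        _ ≤ ∫⁻ _x in s, 1 := by
            refine setLIntegral_mono measurable_const (fun x hx => ?_)
            rw [ContinuousLinearMap.smulRight_one_eq_toSpanSingleton, ContinuousLinearMap.det_toSpanSingleton]
            calc ENNReal.ofReal |deriv f x| ≤ ENNReal.ofReal 1 :=
              ENNReal.ofReal_le_ofReal hx.1.2
              _ = 1 := ENNReal.ofReal_one
        _ = volume s := by rw [setLIntegral_one]
        _ ≤ volume (Icc a b) := measure_mono inter_subset_right
        _ = ENNReal.ofReal (b - a) := Real.volume_Icc
    -- conclude via the intermediate value theorem
    have hsub : uIcc (f a) (f b) ⊆ f '' Icc a b := by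
      have := intermediate_value_uIcc (a := a) (b := b) (f := f)
        (hf.continuous.continuousOn)
      rwa [uIcc_of_le hab] at this
    have hcover : f '' Icc a b ⊆ f '' s ∪ f '' (Icc a b \ s) := by
      rw [← image_union]
      exact image_mono (f := f) (fun x hx => by
        by_cases h : x ∈ s
        · exact Or.inl h
        · exact Or.inr ⟨hx, h⟩)
    have hvol : ENNReal.ofReal |f b - f a| ≤ ENNReal.ofReal (b - a) := by
      calc ENNReal.ofReal |f b - f a| = volume (uIcc (f a) (f b)) := by
            rw [Real.volume_interval]
        _ ≤ volume (f '' s ∪ f '' (Icc a b \ s)) := measure_mono (hsub.trans hcover)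
        _ ≤ volume (f '' s) + volume (f '' (Icc a b \ s)) := measure_union_le _ _
        _ ≤ ENNReal.ofReal (b - a) + 0 := by rw [himg_t]; exact add_le_add_left himg_s 0
        _ = ENNReal.ofReal (b - a) := add_zero _
    rw [ENNReal.ofReal_le_ofReal_iff (by linarith)] at hvol
    exact hvol
  refine LipschitzWith.of_dist_le_mul (fun x y => ?_)
  rw [Real.dist_eq, Real.dist_eq, NNReal.coe_one, one_mul]
  rcases le_total x y with h | h
  · rw [abs_sub_comm, abs_sub_comm x y]
    exact (key x y h).trans (le_abs_self _)
  · exact (key y x h).trans (le_abs_self _)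

/-- In `F₀`, the component `U` is `1`-Lipschitz. -/
lemma U_lip {X : LagState} (hX : X ∈ F0set) : LipschitzWith 1 X.2.1 := by
  obtain ⟨-, -, -, hl1, hl3, ⟨L, hL⟩, -, -, -, hae⟩ := hX
  refine lip_one_of_ae_deriv_le hL ?_
  filter_upwards [hae] with x hx
  have h1 : |deriv X.1 x| ≤ 1 := by simpa using abs_deriv_le_of_lip hl1 x
  have h3 : |deriv X.2.2.1 x| ≤ 1 := by simpa using abs_deriv_le_of_lip hl3 x
  have hsq : (deriv X.2.1 x) ^ 2 ≤ 1 := by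
    have h4 : (deriv X.2.1 x) ^ 2 ≤ deriv X.1 x * deriv X.2.2.1 x := by
      nlinarith [sq_nonneg (X.2.2.2 x)]
    calc (deriv X.2.1 x) ^ 2 ≤ deriv X.1 x * deriv X.2.2.1 x := h4
      _ ≤ |deriv X.1 x * deriv X.2.2.1 x| := le_abs_self _
      _ = |deriv X.1 x| * |deriv X.2.2.1 x| := abs_mul _ _
      _ ≤ 1 := by nlinarith [abs_nonneg (deriv X.1 x), abs_nonneg (deriv X.2.2.1 x)]
  rw [abs_le_one_iff_mul_self_le_one]
  nlinarith [hsq]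

/-- The sum of the three sup-norm differences. -/
noncomputable def Ssum (X Y : LagState) : ℝ≥0∞ :=
  (⨆ ξ, (‖X.1 ξ - Y.1 ξ‖₊ : ℝ≥0∞)) + (⨆ ξ, (‖X.2.1 ξ - Y.2.1 ξ‖₊ : ℝ≥0∞))
    + (⨆ ξ, (‖X.2.2.1 ξ - Y.2.2.1 ξ‖₊ : ℝ≥0∞))

lemma dist_pt_bound {y H y' H' : ℝ → ℝ} (hXid : ∀ ξ, y ξ + H ξ = ξ)
    (hYid : ∀ ξ, y' ξ + H' ξ = ξ) (θ ζ : ℝ) :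
    |θ - ζ| ≤ |y ζ - y' θ| + |H ζ - H' θ| := by
  have h1 := hXid ζ
  have h2 := hYid θ
  have h3 : θ - ζ = (y' θ - y ζ) + (H' θ - H ζ) := by linarith
  calc |θ - ζ| = |(y' θ - y ζ) + (H' θ - H ζ)| := by rw [h3]
    _ ≤ |y' θ - y ζ| + |H' θ - H ζ| := abs_add_le _ _
    _ = |y ζ - y' θ| + |H ζ - H' θ| := by rw [abs_sub_comm, abs_sub_comm (H' θ)]

lemma comp_pt {F F' : ℝ → ℝ} (hF' : LipschitzWith 1 F') {θ ζ c : ℝ}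
    (hc : |θ - ζ| ≤ c) : |F ζ - F' ζ| ≤ |F ζ - F' θ| + c := by
  have h2 : |F' θ - F' ζ| ≤ |θ - ζ| := by
    simpa [Real.dist_eq] using hF'.dist_le_mul θ ζ
  calc |F ζ - F' ζ| ≤ |F ζ - F' θ| + |F' θ - F' ζ| := abs_sub_le _ _ _
    _ ≤ |F ζ - F' θ| + c := by linarith

lemma two_mul_iInf {ι : Sort*} (f : ι → ℝ≥0∞) :
    (2 : ℝ≥0∞) * ⨅ i, f i = ⨅ i, 2 * f i :=
  ENNReal.mul_iInf_of_ne (by norm_num) (by norm_num)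

/-- Key estimate for a single pair of relabelings. -/
lemma Ssum_le_pair (X Y : LagState) (hX : X ∈ F0set) (hY : Y ∈ F0set) (f g : ℝ ≃ₜ ℝ) :
    Ssum X Y ≤ 2 * (distB (relabel X f) Y + distB X (relabel Y g)) := by
  obtain ⟨-, -, hXid, -, -, -, -, -, -, -⟩ := hX
  have hYlip : LipschitzWith 1 Y.2.1 := U_lip hY
  obtain ⟨-, -, hYid, hy'lip, hH'lip, -, -, -, -, -⟩ := hY
  set A1 : ℝ≥0∞ := ⨆ ξ, (‖X.1 (f ξ) - Y.1 ξ‖₊ : ℝ≥0∞) with hA1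
  set A2 : ℝ≥0∞ := ⨆ ξ, (‖X.2.1 (f ξ) - Y.2.1 ξ‖₊ : ℝ≥0∞) with hA2
  set A3 : ℝ≥0∞ := ⨆ ξ, (‖X.2.2.1 (f ξ) - Y.2.2.1 ξ‖₊ : ℝ≥0∞) with hA3
  set B1 : ℝ≥0∞ := ⨆ ξ, (‖X.1 ξ - Y.1 (g ξ)‖₊ : ℝ≥0∞) with hB1
  set B2 : ℝ≥0∞ := ⨆ ξ, (‖X.2.1 ξ - Y.2.1 (g ξ)‖₊ : ℝ≥0∞) with hB2
  set B3 : ℝ≥0∞ := ⨆ ξ, (‖X.2.2.1 ξ - Y.2.2.1 (g ξ)‖₊ : ℝ≥0∞) with hB3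
  have hA : A1 + A2 + A3 ≤ distB (relabel X f) Y := by
    rw [distB, relabel]
    exact le_add_right (le_add_right (le_add_right (le_add_right (le_refl _))))
  have hB : B1 + B2 + B3 ≤ distB X (relabel Y g) := by
    rw [distB, relabel]
    exact le_add_right (le_add_right (le_add_right (le_add_right (le_refl _))))
  -- pointwise real quantities
  have hofA1 : ∀ ζ : ℝ, ENNReal.ofReal |X.1 ζ - Y.1 (f.symm ζ)| ≤ A1 := by
    intro ζ
    have h : X.1 ζ = X.1 (f (f.symm ζ)) := by rw [Homeomorph.apply_symm_apply]
    rw [h, ← Real.enorm_eq_ofReal_abs]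
    exact le_iSup (fun ξ => (‖X.1 (f ξ) - Y.1 ξ‖₊ : ℝ≥0∞)) (f.symm ζ)
  have hofA2 : ∀ ζ : ℝ, ENNReal.ofReal |X.2.1 ζ - Y.2.1 (f.symm ζ)| ≤ A2 := by
    intro ζ
    have h : X.2.1 ζ = X.2.1 (f (f.symm ζ)) := by rw [Homeomorph.apply_symm_apply]
    rw [h, ← Real.enorm_eq_ofReal_abs]
    exact le_iSup (fun ξ => (‖X.2.1 (f ξ) - Y.2.1 ξ‖₊ : ℝ≥0∞)) (f.symm ζ)
  have hofA3 : ∀ ζ : ℝ, ENNReal.ofReal |X.2.2.1 ζ - Y.2.2.1 (f.symm ζ)| ≤ A3 := by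
    intro ζ
    have h : X.2.2.1 ζ = X.2.2.1 (f (f.symm ζ)) := by rw [Homeomorph.apply_symm_apply]
    rw [h, ← Real.enorm_eq_ofReal_abs]
    exact le_iSup (fun ξ => (‖X.2.2.1 (f ξ) - Y.2.2.1 ξ‖₊ : ℝ≥0∞)) (f.symm ζ)
  have hofB1 : ∀ ζ : ℝ, ENNReal.ofReal |X.1 ζ - Y.1 (g ζ)| ≤ B1 := by
    intro ζ; rw [← Real.enorm_eq_ofReal_abs]
    exact le_iSup (fun ξ => (‖X.1 ξ - Y.1 (g ξ)‖₊ : ℝ≥0∞)) ζ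
  have hofB2 : ∀ ζ : ℝ, ENNReal.ofReal |X.2.1 ζ - Y.2.1 (g ζ)| ≤ B2 := by
    intro ζ; rw [← Real.enorm_eq_ofReal_abs]
    exact le_iSup (fun ξ => (‖X.2.1 ξ - Y.2.1 (g ξ)‖₊ : ℝ≥0∞)) ζ
  have hofB3 : ∀ ζ : ℝ, ENNReal.ofReal |X.2.2.1 ζ - Y.2.2.1 (g ζ)| ≤ B3 := by
    intro ζ; rw [← Real.enorm_eq_ofReal_abs]
    exact le_iSup (fun ξ => (‖X.2.2.1 ξ - Y.2.2.1 (g ξ)‖₊ : ℝ≥0∞)) ζ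
  -- distance estimates for the two relabeling points
  have hdh : ∀ ζ : ℝ, |f.symm ζ - ζ| ≤
      |X.1 ζ - Y.1 (f.symm ζ)| + |X.2.2.1 ζ - Y.2.2.1 (f.symm ζ)| :=
    fun ζ => dist_pt_bound hXid hYid (f.symm ζ) ζ
  have hdg : ∀ ζ : ℝ, |g ζ - ζ| ≤
      |X.1 ζ - Y.1 (g ζ)| + |X.2.2.1 ζ - Y.2.2.1 (g ζ)| :=
    fun ζ => dist_pt_bound hXid hYid (g ζ) ζ
  -- the three component estimates
  have hT1 : 2 * (⨆ ξ, (‖X.1 ξ - Y.1 ξ‖₊ : ℝ≥0∞)) ≤ (2*A1 + A3) + (2*B1 + B3) := by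
    rw [ENNReal.mul_iSup]
    refine iSup_le (fun ζ => ?_)
    have hr : 2 * |X.1 ζ - Y.1 ζ| ≤
        (2 * |X.1 ζ - Y.1 (f.symm ζ)| + |X.2.2.1 ζ - Y.2.2.1 (f.symm ζ)|)
        + (2 * |X.1 ζ - Y.1 (g ζ)| + |X.2.2.1 ζ - Y.2.2.1 (g ζ)|) := by
      have e1 := comp_pt (F := X.1) hy'lip (hdh ζ)
      have e2 := comp_pt (F := X.1) hy'lip (hdg ζ)
      linarith
    calc (2:ℝ≥0∞) * ↑‖X.1 ζ - Y.1 ζ‖₊ = ENNReal.ofReal (2 * |X.1 ζ - Y.1 ζ|) := by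
          rw [← enorm_eq_nnnorm, Real.enorm_eq_ofReal_abs, ENNReal.ofReal_mul (by norm_num : (0:ℝ) ≤ 2),
            ENNReal.ofReal_ofNat]
      _ ≤ ENNReal.ofReal ((2 * |X.1 ζ - Y.1 (f.symm ζ)| + |X.2.2.1 ζ - Y.2.2.1 (f.symm ζ)|)
            + (2 * |X.1 ζ - Y.1 (g ζ)| + |X.2.2.1 ζ - Y.2.2.1 (g ζ)|)) :=
          ENNReal.ofReal_le_ofReal hr
      _ ≤ (2*A1 + A3) + (2*B1 + B3) := by
          rw [ENNReal.ofReal_add (by positivity) (by positivity),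
            ENNReal.ofReal_add (by positivity) (abs_nonneg _),
            ENNReal.ofReal_add (by positivity) (abs_nonneg _),
            ENNReal.ofReal_mul (by norm_num : (0:ℝ) ≤ 2),
            ENNReal.ofReal_mul (by norm_num : (0:ℝ) ≤ 2), ENNReal.ofReal_ofNat]
          gcongr
          · exact hofA1 ζ
          · exact hofA3 ζ
          · exact hofB1 ζ
          · exact hofB3 ζ
  have hT3 : 2 * (⨆ ξ, (‖X.2.2.1 ξ - Y.2.2.1 ξ‖₊ : ℝ≥0∞)) ≤ (A1 + 2*A3) + (B1 + 2*B3) := by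
    rw [ENNReal.mul_iSup]
    refine iSup_le (fun ζ => ?_)
    have hr : 2 * |X.2.2.1 ζ - Y.2.2.1 ζ| ≤
        (|X.1 ζ - Y.1 (f.symm ζ)| + 2 * |X.2.2.1 ζ - Y.2.2.1 (f.symm ζ)|)
        + (|X.1 ζ - Y.1 (g ζ)| + 2 * |X.2.2.1 ζ - Y.2.2.1 (g ζ)|) := by
      have e1 := comp_pt (F := X.2.2.1) hH'lip (hdh ζ)
      have e2 := comp_pt (F := X.2.2.1) hH'lip (hdg ζ)
      linarith
    calc (2:ℝ≥0∞) * ↑‖X.2.2.1 ζ - Y.2.2.1 ζ‖₊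
        = ENNReal.ofReal (2 * |X.2.2.1 ζ - Y.2.2.1 ζ|) := by
          rw [← enorm_eq_nnnorm, Real.enorm_eq_ofReal_abs, ENNReal.ofReal_mul (by norm_num : (0:ℝ) ≤ 2),
            ENNReal.ofReal_ofNat]
      _ ≤ ENNReal.ofReal ((|X.1 ζ - Y.1 (f.symm ζ)| + 2 * |X.2.2.1 ζ - Y.2.2.1 (f.symm ζ)|)
            + (|X.1 ζ - Y.1 (g ζ)| + 2 * |X.2.2.1 ζ - Y.2.2.1 (g ζ)|)) :=
          ENNReal.ofReal_le_ofReal hr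
      _ ≤ (A1 + 2*A3) + (B1 + 2*B3) := by
          rw [ENNReal.ofReal_add (by positivity) (by positivity),
            ENNReal.ofReal_add (abs_nonneg _) (by positivity),
            ENNReal.ofReal_add (abs_nonneg _) (by positivity),
            ENNReal.ofReal_mul (by norm_num : (0:ℝ) ≤ 2),
            ENNReal.ofReal_mul (by norm_num : (0:ℝ) ≤ 2), ENNReal.ofReal_ofNat]
          gcongr
          · exact hofA1 ζ
          · exact hofA3 ζ
          · exact hofB1 ζ
          · exact hofB3 ζ
  have hT2 : 2 * (⨆ ξ, (‖X.2.1 ξ - Y.2.1 ξ‖₊ : ℝ≥0∞)) ≤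
      (A1 + A2 + A3) + (B1 + B2 + B3) := by
    rw [ENNReal.mul_iSup]
    refine iSup_le (fun ζ => ?_)
    have hr : 2 * |X.2.1 ζ - Y.2.1 ζ| ≤
        (|X.1 ζ - Y.1 (f.symm ζ)| + |X.2.1 ζ - Y.2.1 (f.symm ζ)|
          + |X.2.2.1 ζ - Y.2.2.1 (f.symm ζ)|)
        + (|X.1 ζ - Y.1 (g ζ)| + |X.2.1 ζ - Y.2.1 (g ζ)| + |X.2.2.1 ζ - Y.2.2.1 (g ζ)|) := by
      have e1 := comp_pt (F := X.2.1) hYlip (hdh ζ)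
      have e2 := comp_pt (F := X.2.1) hYlip (hdg ζ)
      linarith
    calc (2:ℝ≥0∞) * ↑‖X.2.1 ζ - Y.2.1 ζ‖₊
        = ENNReal.ofReal (2 * |X.2.1 ζ - Y.2.1 ζ|) := by
          rw [← enorm_eq_nnnorm, Real.enorm_eq_ofReal_abs, ENNReal.ofReal_mul (by norm_num : (0:ℝ) ≤ 2),
            ENNReal.ofReal_ofNat]
      _ ≤ ENNReal.ofReal ((|X.1 ζ - Y.1 (f.symm ζ)| + |X.2.1 ζ - Y.2.1 (f.symm ζ)|
            + |X.2.2.1 ζ - Y.2.2.1 (f.symm ζ)|)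
          + (|X.1 ζ - Y.1 (g ζ)| + |X.2.1 ζ - Y.2.1 (g ζ)|
            + |X.2.2.1 ζ - Y.2.2.1 (g ζ)|)) := ENNReal.ofReal_le_ofReal hr
      _ ≤ (A1 + A2 + A3) + (B1 + B2 + B3) := by
          rw [ENNReal.ofReal_add (by positivity) (by positivity),
            ENNReal.ofReal_add (by positivity) (abs_nonneg _),
            ENNReal.ofReal_add (abs_nonneg _) (abs_nonneg _),
            ENNReal.ofReal_add (by positivity) (abs_nonneg _),
            ENNReal.ofReal_add (abs_nonneg _) (abs_nonneg _)]
          gcongr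
          · exact hofA1 ζ
          · exact hofA2 ζ
          · exact hofA3 ζ
          · exact hofB1 ζ
          · exact hofB2 ζ
          · exact hofB3 ζ
  -- combine
  have hsum : 2 * Ssum X Y ≤ 4 * ((A1 + A2 + A3) + (B1 + B2 + B3)) := by
    calc 2 * Ssum X Y
        = 2 * (⨆ ξ, (‖X.1 ξ - Y.1 ξ‖₊ : ℝ≥0∞))
          + 2 * (⨆ ξ, (‖X.2.1 ξ - Y.2.1 ξ‖₊ : ℝ≥0∞))
          + 2 * (⨆ ξ, (‖X.2.2.1 ξ - Y.2.2.1 ξ‖₊ : ℝ≥0∞)) := by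
          rw [Ssum]; ring
      _ ≤ ((2*A1 + A3) + (2*B1 + B3)) + ((A1 + A2 + A3) + (B1 + B2 + B3))
          + ((A1 + 2*A3) + (B1 + 2*B3)) := by gcongr
      _ = 4*A1 + A2 + 4*A3 + (4*B1 + B2 + 4*B3) := by ring
      _ ≤ 4*A1 + 4*A2 + 4*A3 + (4*B1 + 4*B2 + 4*B3) := by
          gcongr
          · exact le_mul_of_one_le_left zero_le (by norm_num)
          · exact le_mul_of_one_le_left zero_le (by norm_num)
      _ = 4 * ((A1 + A2 + A3) + (B1 + B2 + B3)) := by ring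
  have hfin : 2 * Ssum X Y ≤ 2 * (2 * (distB (relabel X f) Y + distB X (relabel Y g))) := by
    calc 2 * Ssum X Y ≤ 4 * ((A1 + A2 + A3) + (B1 + B2 + B3)) := hsum
      _ ≤ 4 * (distB (relabel X f) Y + distB X (relabel Y g)) := by gcongr
      _ = 2 * (2 * (distB (relabel X f) Y + distB X (relabel Y g))) := by ring
  exact (ENNReal.mul_le_mul_iff_right (by norm_num) (by norm_num)).1 hfin

lemma Ssum_le_J (X Y : LagState) (hX : X ∈ F0set) (hY : Y ∈ F0set) :
    Ssum X Y ≤ 2 * Jfun X Y := by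
  rw [Jfun]
  simp only [two_mul_iInf]
  refine le_iInf (fun f => le_iInf (fun hf => le_iInf (fun g => le_iInf (fun hg => ?_))))
  exact Ssum_le_pair X Y hX hY f g

lemma Ssum_self (X : LagState) : Ssum X X = 0 := by
  simp [Ssum]

lemma Ssum_triangle (X Y Z : LagState) : Ssum X Z ≤ Ssum X Y + Ssum Y Z := by
  have h : ∀ (u v w : ℝ → ℝ),
      (⨆ ξ, (‖u ξ - w ξ‖₊ : ℝ≥0∞)) ≤
        (⨆ ξ, (‖u ξ - v ξ‖₊ : ℝ≥0∞)) + (⨆ ξ, (‖v ξ - w ξ‖₊ : ℝ≥0∞)) := by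
    intro u v w
    refine iSup_le (fun ζ => ?_)
    have : (‖u ζ - w ζ‖₊ : ℝ≥0∞) ≤ (‖u ζ - v ζ‖₊ : ℝ≥0∞) + (‖v ζ - w ζ‖₊ : ℝ≥0∞) := by
      have h2 : u ζ - w ζ = (u ζ - v ζ) + (v ζ - w ζ) := by ring
      rw [h2]
      exact_mod_cast nnnorm_add_le _ _
    refine this.trans ?_
    gcongr
    · exact le_iSup (fun ξ => (‖u ξ - v ξ‖₊ : ℝ≥0∞)) ζ
    · exact le_iSup (fun ξ => (‖v ξ - w ξ‖₊ : ℝ≥0∞)) ζ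
  rw [Ssum, Ssum, Ssum]
  calc (⨆ ξ, (‖X.1 ξ - Z.1 ξ‖₊ : ℝ≥0∞)) + (⨆ ξ, (‖X.2.1 ξ - Z.2.1 ξ‖₊ : ℝ≥0∞))
      + (⨆ ξ, (‖X.2.2.1 ξ - Z.2.2.1 ξ‖₊ : ℝ≥0∞))
      ≤ ((⨆ ξ, (‖X.1 ξ - Y.1 ξ‖₊ : ℝ≥0∞)) + (⨆ ξ, (‖Y.1 ξ - Z.1 ξ‖₊ : ℝ≥0∞)))
        + ((⨆ ξ, (‖X.2.1 ξ - Y.2.1 ξ‖₊ : ℝ≥0∞)) + (⨆ ξ, (‖Y.2.1 ξ - Z.2.1 ξ‖₊ : ℝ≥0∞)))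
        + ((⨆ ξ, (‖X.2.2.1 ξ - Y.2.2.1 ξ‖₊ : ℝ≥0∞))
          + (⨆ ξ, (‖Y.2.2.1 ξ - Z.2.2.1 ξ‖₊ : ℝ≥0∞))) := by
        gcongr <;> [exact h X.1 Y.1 Z.1; exact h X.2.1 Y.2.1 Z.2.1;
          exact h X.2.2.1 Y.2.2.1 Z.2.2.1]
    _ = _ := by ring

lemma Ssum_chain (c : ℕ → LagState) (N : ℕ) :
    Ssum (c 0) (c N) ≤ ∑ n ∈ Finset.range N, Ssum (c n) (c (n + 1)) := by
  induction N with
  | zero => simp [Ssum_self]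
  | succ n ih =>
    rw [Finset.sum_range_succ]
    calc Ssum (c 0) (c (n + 1)) ≤ Ssum (c 0) (c n) + Ssum (c n) (c (n + 1)) :=
        Ssum_triangle _ _ _
      _ ≤ _ := add_le_add_left ih _

/-- Lower bound: `‖y - ȳ‖_∞ + ‖U - Ū‖_∞ + ‖H - H̄‖_∞ ≤ 2 d(X, X̄)` on `F₀`. -/
theorem supNorms_le_two_dF0 (X Y : LagState) (hX : X ∈ F0set) (hY : Y ∈ F0set) :
    (⨆ ξ, (‖X.1 ξ - Y.1 ξ‖₊ : ℝ≥0∞)) + (⨆ ξ, (‖X.2.1 ξ - Y.2.1 ξ‖₊ : ℝ≥0∞))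
        + (⨆ ξ, (‖X.2.2.1 ξ - Y.2.2.1 ξ‖₊ : ℝ≥0∞))
      ≤ 2 * dF0 X Y := by
  change Ssum X Y ≤ 2 * dF0 X Y
  rw [dF0, sInf_eq_iInf]
  simp only [two_mul_iInf]
  refine le_iInf (fun s => le_iInf (fun hs => ?_))
  obtain ⟨N, c, hc0, hcN, hmem, rfl⟩ := hs
  calc Ssum X Y = Ssum (c 0) (c N) := by rw [hc0, hcN]
    _ ≤ ∑ n ∈ Finset.range N, Ssum (c n) (c (n + 1)) := Ssum_chain c N
    _ ≤ ∑ n ∈ Finset.range N, 2 * Jfun (c n) (c (n + 1)) := by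
        refine Finset.sum_le_sum (fun n hn => ?_)
        have hn' := Finset.mem_range.1 hn
        exact Ssum_le_J _ _ (hmem n (le_of_lt hn')) (hmem (n + 1) hn')
    _ = 2 * ∑ n ∈ Finset.range N, Jfun (c n) (c (n + 1)) := by rw [Finset.mul_sum]
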